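/- Let D be a noncommutative division ring of characteristic 2, and let f, g : D → D be additive maps such that f(x) = g(x⁻¹) for all nonzero x ∈ D. Then f = 0 and g = 0. -/

import Mathlib

theorem stmt_9 {D : Type*} [DivisionRing D] [CharP D 2]
    (hnc : ∃ a b : D, a * b ≠ b * a)
    (f g : D → D)
    (hf : ∀ x y : D, f (x + y) = f x + f y)
    (hg : ∀ x y : D, g (x + y) = g x + g y)
    (h : ∀ x : D, x ≠ 0 → f x = g x⁻¹) :
    f = 0 ∧ g = 0 := by
  classical
  have two : ∀ z : D, z + z = 0 := CharTwo.add_self_eq_zero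
  have addeq : ∀ a b : D, a + b = 0 ↔ a = b := fun a b => by
    rw [CharTwo.add_eq_iff_eq_add, zero_add]
  have f0 : f 0 = 0 := by
    have h0 := hf 0 0
    rw [add_zero] at h0
    exact (left_eq_add.mp h0)
  have g0 : g 0 = 0 := by
    have h0 := hg 0 0
    rw [add_zero] at h0
    exact (left_eq_add.mp h0)
  have f2 : ∀ z : D, f z + f z = 0 := fun z => by rw [← hf, two z, f0]
  -- D is infinite
  haveI inf : Infinite D := by
    by_contra hfin
    rw [not_infinite_iff_finite] at hfin
    obtain ⟨a, b, hab⟩ := hnc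
    exact hab (mul_comm a b)
  -- L1 : f (x*x) = f 1 + f x for x ≠ 0, 1
  have L1 : ∀ x : D, x ≠ 0 → x ≠ 1 → f (x * x) = f 1 + f x := by
    intro x hx0 hx1
    have h1x : (1 : D) + x ≠ 0 := fun hc => hx1 ((addeq 1 x).mp hc).symm
    have hxe : x + x * x = x * (1 + x) := by noncomm_ring
    have hu : x + x * x ≠ 0 := by rw [hxe]; exact mul_ne_zero hx0 h1x
    have hinv : (x + x * x)⁻¹ = x⁻¹ + (1 + x)⁻¹ := by
      apply inv_eq_of_mul_eq_one_right
      have e1 : (x + x * x) * (x⁻¹ + (1 + x)⁻¹)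
          = (x * x⁻¹ + x * (x * x⁻¹)) + x * ((1 + x) * (1 + x)⁻¹) := by
        noncomm_ring
      rw [e1, mul_inv_cancel₀ hx0, mul_inv_cancel₀ h1x]
      simp only [mul_one]
      rw [add_assoc, two x, add_zero]
    have e2 : f (x + x * x) = f x + f (x * x) := hf x (x * x)
    have e3 : f (x + x * x) = f x + (f 1 + f x) := by
      rw [h _ hu, hinv, hg, ← h x hx0, ← h (1 + x) h1x, hf 1 x]
    rw [e3] at e2
    exact (add_left_cancel e2).symm
  -- L2 : Hua identity consequence
  have L2 : ∀ a x : D, a ≠ 0 → x ≠ 0 → x * a ≠ 1 → f (a * x * a) = g x + f a := by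
    intro a x ha hx hxa
    have h1xa : (1 : D) + x * a ≠ 0 := fun hc => hxa ((addeq 1 (x * a)).mp hc).symm
    have hvxe : x⁻¹ + a = x⁻¹ * (1 + x * a) := by
      rw [mul_add, mul_one, ← mul_assoc, inv_mul_cancel₀ hx, one_mul]
    have hv : x⁻¹ + a ≠ 0 := by rw [hvxe]; exact mul_ne_zero (inv_ne_zero hx) h1xa
    have hue : a + a * x * a = a * x * (x⁻¹ + a) := by
      rw [mul_add, mul_assoc a x x⁻¹, mul_inv_cancel₀ hx, mul_one]
    have hu : a + a * x * a ≠ 0 := by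
      rw [hue]; exact mul_ne_zero (mul_ne_zero ha hx) hv
    have hinv : (a + a * x * a)⁻¹ = a⁻¹ + (x⁻¹ + a)⁻¹ := by
      apply inv_eq_of_mul_eq_one_right
      have e1 : (a * x * (x⁻¹ + a)) * (a⁻¹ + (x⁻¹ + a)⁻¹)
          = (a * (x * x⁻¹) * a⁻¹ + a * x * (a * a⁻¹)) +
              a * x * ((x⁻¹ + a) * (x⁻¹ + a)⁻¹) := by
        noncomm_ring
      rw [hue, e1, mul_inv_cancel₀ hx, mul_inv_cancel₀ ha, mul_inv_cancel₀ hv]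
      simp only [mul_one]
      rw [mul_inv_cancel₀ ha, add_assoc, two (a * x), add_zero]
    have e2 : f (a + a * x * a) = f a + f (a * x * a) := hf a (a * x * a)
    have e3 : f (a + a * x * a) = f a + (g x + f a) := by
      rw [h _ hu, hinv, hg, ← h a ha, ← h (x⁻¹ + a) hv, hf x⁻¹ a,
        h x⁻¹ (inv_ne_zero hx), inv_inv]
    rw [e3] at e2
    exact (add_left_cancel e2).symm
  -- polarization of L1
  have P : ∀ x y : D, x ≠ 0 → x ≠ 1 → y ≠ 0 → y ≠ 1 → x + y ≠ 0 → x + y ≠ 1 →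
      f (x * y + y * x) = f 1 := by
    intro x y hx0 hx1 hy0 hy1 hxy0 hxy1
    have e1 := L1 (x + y) hxy0 hxy1
    have ex : (x + y) * (x + y) = x * x + (x * y + y * x) + y * y := by noncomm_ring
    rw [ex, hf (x * x + (x * y + y * x)) (y * y), hf (x * x) (x * y + y * x),
      L1 x hx0 hx1, L1 y hy0 hy1, hf x y] at e1
    -- e1 : f 1 + f x + f (x*y+y*x) + (f 1 + f y) = f 1 + (f x + f y)
    have e2 : (f 1 + (f x + f y)) + (f 1 + f (x * y + y * x))
        = f 1 + f x + f (x * y + y * x) + (f 1 + f y) := by abel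
    rw [e1] at e2
    have e3 := add_eq_left.mp e2
    exact ((addeq (f 1) (f (x * y + y * x))).mp e3).symm
  -- f 1 = 0
  have f1 : f 1 = 0 := by
    obtain ⟨x, hx⟩ := Infinite.exists_notMem_finset ({0, 1} : Finset D)
    simp only [Finset.mem_insert, Finset.mem_singleton, not_or] at hx
    obtain ⟨hx0, hx1⟩ := hx
    obtain ⟨y1, hy1⟩ := Infinite.exists_notMem_finset ({0, 1, x, x + 1} : Finset D)
    simp only [Finset.mem_insert, Finset.mem_singleton, not_or] at hy1
    obtain ⟨hy10, hy11, hy1x, hy1x1⟩ := hy1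
    obtain ⟨y2, hy2⟩ := Infinite.exists_notMem_finset
      ({0, 1, x, x + 1, y1, y1 + 1, x + y1, x + y1 + 1} : Finset D)
    simp only [Finset.mem_insert, Finset.mem_singleton, not_or] at hy2
    obtain ⟨hy20, hy21, hy2x, hy2x1, hy2y1, hy2y11, hy2xy1, hy2xy11⟩ := hy2
    have hadd1 : ∀ u v : D, u + v = 1 → u = v + 1 := by
      intro u v huv
      have : u + v + v = 1 + v := by rw [huv]
      rw [add_assoc, two v, add_zero] at this
      rw [this, add_comm]
    have hsum0 : ∀ u v : D, (v ≠ u) → u + v ≠ 0 := fun u v hvu hc =>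
      hvu ((addeq u v).mp hc).symm
    have q1 := P x y1 hx0 hx1 hy10 hy11 (hsum0 x y1 hy1x)
      (fun hc => hy1x1 (hadd1 y1 x (by rwa [add_comm] at hc)))
    have q2 := P x y2 hx0 hx1 hy20 hy21 (hsum0 x y2 hy2x)
      (fun hc => hy2x1 (hadd1 y2 x (by rwa [add_comm] at hc)))
    have hy120 : y1 + y2 ≠ 0 := hsum0 y1 y2 hy2y1
    have hy121 : y1 + y2 ≠ 1 := fun hc =>
      hy2y11 (hadd1 y2 y1 (by rwa [add_comm] at hc))
    have hxy120 : x + (y1 + y2) ≠ 0 := by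
      rw [← add_assoc]; exact hsum0 (x + y1) y2 hy2xy1
    have hxy121 : x + (y1 + y2) ≠ 1 := by
      rw [← add_assoc]
      exact fun hc => hy2xy11 (hadd1 y2 (x + y1) (by rwa [add_comm] at hc))
    have q12 := P x (y1 + y2) hx0 hx1 hy120 hy121 hxy120 hxy121
    have ex : x * (y1 + y2) + (y1 + y2) * x
        = (x * y1 + y1 * x) + (x * y2 + y2 * x) := by noncomm_ring
    rw [ex, hf, q1, q2, two (f 1)] at q12
    exact q12.symm
  -- f (x*x) = f x for all x
  have L5 : ∀ x : D, f (x * x) = f x := by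
    intro x
    by_cases hx0 : x = 0
    · rw [hx0, mul_zero]
    by_cases hx1 : x = 1
    · rw [hx1, mul_one]
    rw [L1 x hx0 hx1, f1, zero_add]
  -- f (xy + yx) = 0 for all x y
  have L6 : ∀ x y : D, f (x * y + y * x) = 0 := by
    intro x y
    have e1 := L5 (x + y)
    have ex : (x + y) * (x + y) = x * x + (x * y + y * x) + y * y := by noncomm_ring
    rw [ex, hf (x * x + (x * y + y * x)) (y * y), hf (x * x) (x * y + y * x),
      L5 x, L5 y, hf x y] at e1
    -- e1 : (f x + f (x*y+y*x)) + f y = f x + f y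
    have := add_right_cancel e1
    rwa [add_eq_left] at this
  -- f x = 0 for all x
  have L8 : ∀ x : D, f x = 0 := by
    intro x
    by_cases hx0 : x = 0
    · rw [hx0, f0]
    by_cases hx1 : x = 1
    · rw [hx1, f1]
    obtain ⟨b, hb⟩ := Infinite.exists_notMem_finset
      ({0, 1, x⁻¹, x⁻¹ + 1} : Finset D)
    simp only [Finset.mem_insert, Finset.mem_singleton, not_or] at hb
    obtain ⟨hb0, hb1, hbx, hbx1⟩ := hb
    have h1b : (1 : D) + b ≠ 0 := fun hc => hb1 ((addeq 1 b).mp hc).symm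
    have hxb : x * b ≠ 1 := fun hc => hbx (eq_inv_of_mul_eq_one_right hc)
    have hx1b : x * (1 + b) ≠ 1 := by
      intro hc
      have hb' : 1 + b = x⁻¹ := eq_inv_of_mul_eq_one_right hc
      apply hbx1
      have : (1 : D) + (1 + b) = 1 + x⁻¹ := by rw [hb']
      rwa [← add_assoc, two (1 : D), zero_add, add_comm (1 : D) x⁻¹] at this
    have A := L2 b x hb0 hx0 hxb
    have B := L2 (1 + b) x h1b hx0 hx1b
    have ex : (1 + b) * x * (1 + b) = x + (x * b + b * x) + b * x * b := by
      noncomm_ring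
    rw [ex, hf, hf, L6 x b, add_zero, A, hf 1 b, f1, zero_add] at B
    -- B : (f x + (g x + f b)) = g x + f b
    rwa [add_eq_right] at B
  -- g x = 0 for all x
  have L9 : ∀ x : D, g x = 0 := by
    intro x
    by_cases hx0 : x = 0
    · rw [hx0, g0]
    by_cases hx1 : x = 1
    · rw [hx1, ← inv_one, ← h 1 one_ne_zero, f1]
    have := L2 1 x one_ne_zero hx0 (by rwa [mul_one])
    rw [one_mul, mul_one, L8 x, L8 1, add_zero] at this
    exact this.symm
  exact ⟨funext fun x => L8 x, funext fun x => L9 x⟩
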